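/- Let (X_1, Y_1), …, (X_N, Y_N) be i.i.d. pairs with X_i ∈ ℝ^d, Y_i ∈ ℝ, E[Y_1^2] < ∞. Let r(x) = E[Y | X = x] be 1-Lipschitz, and assume Var(Y − r(X) | X = x) ≤ σ^2 for all x in the support. Let W_1(x), …, W_N(x) ∈ [0,1] be Borel measurable functions of x and X_1, …, X_N only, with ∑_{i=1}^N W_i(x) = 1, and set r̂_N(x) = ∑_{i=1}^N W_i(x) Y_i. Then for all s, t > 0, P(|r̂_N(x) − r(x)| ≥ t + s) ≤ σ^2 E[∑_{i=1}^N W_i(x)^2] / t^2 + P(∑_{i=1}^N W_i(x)‖X_i − x‖ ≥ s). -/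

import Mathlib

open MeasureTheory ProbabilityTheory

/-! ### Auxiliary lemmas -/

/-- The conditional expectation of an `L²` function is in `L²`. -/
lemma memLp_two_condexp_aux {Ω : Type*} {m m0 : MeasurableSpace Ω} {μ : Measure Ω}
    [IsFiniteMeasure μ] (hm : m ≤ m0) {f : Ω → ℝ} (hf : MemLp f 2 μ) :
    MemLp (μ[f|m]) 2 μ := by
  have hfi : Integrable f μ := hf.integrable one_le_two
  set g : Lp ℝ 2 μ := (condExpL2 ℝ ℝ hm (hf.toLp f) : Lp ℝ 2 μ) with hg
  have hae : (g : Ω → ℝ) =ᵐ[μ] μ[f|m] := by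
    refine ae_eq_condExp_of_forall_setIntegral_eq hm hfi
      (fun s _ _ => ((Lp.memLp g).integrable one_le_two).integrableOn)
      (fun s hs _ => ?_) ?_
    · rw [integral_condExpL2_eq hm (hf.toLp f) hs (measure_ne_top μ s)]
      exact setIntegral_congr_ae (hm s hs) ((hf.coeFn_toLp).mono fun x hx _ => hx)
    · exact lpMeas.aestronglyMeasurable (condExpL2 ℝ ℝ hm (hf.toLp f))
  exact (Lp.memLp g).ae_eq hae

/-- Conditioning on `m₁ ⊔ m₂` where `m₂` is independent of `(f, m₁)` is the same as
conditioning on `m₁`. -/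
lemma condexp_sup_indep_aux {Ω : Type*} {m₁ m₂ mF : MeasurableSpace Ω}
    {m0 : MeasurableSpace Ω} {μ : Measure Ω} [IsProbabilityMeasure μ]
    (hF : mF ≤ m0) (h₂ : m₂ ≤ m0) (h₁F : m₁ ≤ mF)
    {f : Ω → ℝ} (hfint : Integrable f μ) (hfm : StronglyMeasurable[mF] f)
    (hindep : Indep mF m₂ μ) :
    μ[f | m₁ ⊔ m₂] =ᵐ[μ] μ[f | m₁] := by
  have h₁ : m₁ ≤ m0 := h₁F.trans hF
  have hsup : m₁ ⊔ m₂ ≤ m0 := sup_le h₁ h₂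
  set S : Set (Set Ω) :=
    {u | ∃ a, MeasurableSet[m₁] a ∧ ∃ b, MeasurableSet[m₂] b ∧ u = a ∩ b} with hS
  have h_pi : IsPiSystem S := by
    rintro u ⟨a1, ha1, b1, hb1, rfl⟩ v ⟨a2, ha2, b2, hb2, rfl⟩ -
    exact ⟨a1 ∩ a2, ha1.inter ha2, b1 ∩ b2, hb1.inter hb2, by
      rw [Set.inter_inter_inter_comm]⟩
  have h_eq : (m₁ ⊔ m₂ : MeasurableSpace Ω) = MeasurableSpace.generateFrom S := by
    refine le_antisymm (sup_le ?_ ?_) (MeasurableSpace.generateFrom_le ?_)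
    · intro a ha
      exact MeasurableSpace.measurableSet_generateFrom
        ⟨a, ha, Set.univ, MeasurableSet.univ, (Set.inter_univ a).symm⟩
    · intro b hb
      exact MeasurableSpace.measurableSet_generateFrom
        ⟨Set.univ, MeasurableSet.univ, b, hb, (Set.univ_inter b).symm⟩
    · rintro u ⟨a, ha, b, hb, rfl⟩
      exact MeasurableSet.inter ((le_sup_left : m₁ ≤ m₁ ⊔ m₂) a ha)
        ((le_sup_right : m₂ ≤ m₁ ⊔ m₂) b hb)
  have key : ∀ ⦃A : Set Ω⦄, MeasurableSet[m₁ ⊔ m₂] A →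
      ∫ x in A, (μ[f|m₁]) x ∂μ = ∫ x in A, f x ∂μ := by
    refine @MeasurableSpace.induction_on_inter Ω (m₁ ⊔ m₂)
      (fun A _ => ∫ x in A, (μ[f|m₁]) x ∂μ = ∫ x in A, f x ∂μ) S
      h_eq h_pi (by simp) ?_ ?_ ?_
    · rintro u ⟨a, ha, b, hb, rfl⟩
      have ha0 : MeasurableSet a := h₁ a ha
      have hb0 : MeasurableSet b := h₂ b hb
      have hbm₂ : Measurable[m₂] (b.indicator (fun _ => (1 : ℝ))) :=
        measurable_const.indicator hb
      have hmul_f : (a ∩ b).indicator f =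
          (a.indicator f) * (b.indicator (fun _ => (1 : ℝ))) := by
        funext ω
        by_cases hωa : ω ∈ a <;> by_cases hωb : ω ∈ b <;>
          simp [Set.indicator_apply, hωa, hωb]
      have hmul_g : (a ∩ b).indicator (μ[f|m₁]) =
          (a.indicator (μ[f|m₁])) * (b.indicator (fun _ => (1 : ℝ))) := by
        funext ω
        by_cases hωa : ω ∈ a <;> by_cases hωb : ω ∈ b <;>
          simp [Set.indicator_apply, hωa, hωb]
      have hindepf : IndepFun (a.indicator f) (b.indicator (fun _ => (1 : ℝ))) μ := by
        rw [IndepFun_iff_Indep]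
        refine indep_of_indep_of_le_left (indep_of_indep_of_le_right hindep
          hbm₂.comap_le) ?_
        exact Measurable.comap_le (hfm.measurable.indicator (h₁F a ha))
      have hindepg : IndepFun (a.indicator (μ[f|m₁])) (b.indicator (fun _ => (1 : ℝ))) μ := by
        rw [IndepFun_iff_Indep]
        refine indep_of_indep_of_le_left (indep_of_indep_of_le_right hindep
          hbm₂.comap_le) (Measurable.comap_le ?_ |>.trans h₁F)
        exact stronglyMeasurable_condExp.measurable.indicator ha
      have hfa : Integrable (a.indicator f) μ := hfint.indicator ha0
      have hga : Integrable (a.indicator (μ[f|m₁])) μ := integrable_condExp.indicator ha0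
      have hb1 : Integrable (b.indicator (fun _ => (1 : ℝ))) μ :=
        (integrable_const 1).indicator hb0
      calc ∫ x in a ∩ b, (μ[f|m₁]) x ∂μ
          = ∫ x, ((a.indicator (μ[f|m₁])) * (b.indicator (fun _ => (1 : ℝ)))) x ∂μ := by
            rw [← hmul_g, integral_indicator (ha0.inter hb0)]
        _ = (∫ x, a.indicator (μ[f|m₁]) x ∂μ) * ∫ x, b.indicator (fun _ => (1 : ℝ)) x ∂μ :=
            hindepg.integral_mul_eq_mul_integral hga.aestronglyMeasurable hb1.aestronglyMeasurable
        _ = (∫ x, a.indicator f x ∂μ) * ∫ x, b.indicator (fun _ => (1 : ℝ)) x ∂μ := by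
            rw [integral_indicator ha0, integral_indicator ha0,
              setIntegral_condExp h₁ hfint ha]
        _ = ∫ x, ((a.indicator f) * (b.indicator (fun _ => (1 : ℝ)))) x ∂μ :=
            (hindepf.integral_mul_eq_mul_integral hfa.aestronglyMeasurable hb1.aestronglyMeasurable).symm
        _ = ∫ x in a ∩ b, f x ∂μ := by rw [← hmul_f, integral_indicator (ha0.inter hb0)]
    · intro u hu hC
      have hu0 : MeasurableSet u := hsup u hu
      have h1 := integral_add_compl hu0 (integrable_condExp : Integrable (μ[f|m₁]) μ)
      have h2 := integral_add_compl hu0 hfint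
      have h3 : ∫ x, (μ[f|m₁]) x ∂μ = ∫ x, f x ∂μ := integral_condExp h₁
      linarith
    · intro g hdisj hmeas hC
      have hmeas0 : ∀ i, MeasurableSet[m0] (g i) := fun i => hsup _ (hmeas i)
      rw [integral_iUnion hmeas0 hdisj hfint.integrableOn,
        integral_iUnion hmeas0 hdisj integrable_condExp.integrableOn]
      exact tsum_congr fun i => hC i
  exact (ae_eq_condExp_of_forall_setIntegral_eq hsup hfint
    (fun s _ _ => integrable_condExp.integrableOn) (fun s hs _ => key hs)
    ((stronglyMeasurable_condExp.mono (le_sup_left : m₁ ≤ m₁ ⊔ m₂)).aestronglyMeasurable)).symm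

section PullOut

variable {Ω : Type*} {m₁ m₂ mF : MeasurableSpace Ω}
    {m0 : MeasurableSpace Ω} {μ : Measure Ω} [IsProbabilityMeasure μ]

lemma integral_mul_condexp_aux
    (hF : mF ≤ m0) (h₂ : m₂ ≤ m0) (h₁F : m₁ ≤ mF) (hindep : Indep mF m₂ μ)
    {Z g : Ω → ℝ} (hZint : Integrable Z μ) (hZm : StronglyMeasurable[mF] Z)
    (hg : StronglyMeasurable[m₁ ⊔ m₂] g) (hgZ : Integrable (g * Z) μ) :
    ∫ ω, g ω * Z ω ∂μ = ∫ ω, g ω * (μ[Z|m₁]) ω ∂μ ∧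
      Integrable (fun ω => g ω * (μ[Z|m₁]) ω) μ := by
  have hsup : m₁ ⊔ m₂ ≤ m0 := sup_le (h₁F.trans hF) h₂
  have h1 : μ[(g * Z : Ω → ℝ)|m₁ ⊔ m₂] =ᵐ[μ] g * μ[Z|m₁ ⊔ m₂] :=
    condExp_mul_of_stronglyMeasurable_left hg hgZ hZint
  have h2 : μ[Z|m₁ ⊔ m₂] =ᵐ[μ] μ[Z|m₁] :=
    condexp_sup_indep_aux hF h₂ h₁F hZint hZm hindep
  have h3 : μ[(g * Z : Ω → ℝ)|m₁ ⊔ m₂] =ᵐ[μ] fun ω => g ω * (μ[Z|m₁]) ω :=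
    h1.trans (Filter.EventuallyEq.mul (Filter.EventuallyEq.rfl (f := g)) h2)
  constructor
  · calc ∫ ω, g ω * Z ω ∂μ = ∫ ω, (μ[(g * Z : Ω → ℝ)|m₁ ⊔ m₂]) ω ∂μ :=
        (integral_condExp hsup).symm
    _ = ∫ ω, g ω * (μ[Z|m₁]) ω ∂μ := integral_congr_ae h3
  · exact integrable_condExp.congr h3

lemma integral_mul_eq_zero_of_condexp_zero
    (hF : mF ≤ m0) (h₂ : m₂ ≤ m0) (h₁F : m₁ ≤ mF) (hindep : Indep mF m₂ μ)
    {Z g : Ω → ℝ} (hZint : Integrable Z μ) (hZm : StronglyMeasurable[mF] Z)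
    (hg : StronglyMeasurable[m₁ ⊔ m₂] g) (hgZ : Integrable (g * Z) μ)
    (h0 : μ[Z|m₁] =ᵐ[μ] 0) : ∫ ω, g ω * Z ω ∂μ = 0 := by
  obtain ⟨heq, -⟩ := integral_mul_condexp_aux hF h₂ h₁F hindep hZint hZm hg hgZ
  rw [heq]
  have : (fun ω => g ω * (μ[Z|m₁]) ω) =ᵐ[μ] 0 := by
    filter_upwards [h0] with ω hω
    simp [hω]
  rw [integral_congr_ae this]
  simp

lemma integral_mul_le_of_condexp_le
    (hF : mF ≤ m0) (h₂ : m₂ ≤ m0) (h₁F : m₁ ≤ mF) (hindep : Indep mF m₂ μ)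
    {Z g : Ω → ℝ} (hZint : Integrable Z μ) (hZm : StronglyMeasurable[mF] Z)
    (hg : StronglyMeasurable[m₁ ⊔ m₂] g) (hgZ : Integrable (g * Z) μ)
    (hg0 : ∀ ω, 0 ≤ g ω) (hg1 : ∀ ω, g ω ≤ 1) {c : ℝ}
    (hle : μ[Z|m₁] ≤ᵐ[μ] fun _ => c) :
    ∫ ω, g ω * Z ω ∂μ ≤ c * ∫ ω, g ω ∂μ := by
  have hsup : m₁ ⊔ m₂ ≤ m0 := sup_le (h₁F.trans hF) h₂
  obtain ⟨heq, hint⟩ := integral_mul_condexp_aux hF h₂ h₁F hindep hZint hZm hg hgZ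
  rw [heq]
  have hgmeas : AEStronglyMeasurable g μ := (hg.mono hsup).aestronglyMeasurable
  have hgc : Integrable (fun ω => g ω * c) μ := by
    refine (integrable_const c).bdd_mul (c := 1) hgmeas (Filter.Eventually.of_forall fun ω => ?_)
    rw [Real.norm_eq_abs, abs_of_nonneg (hg0 ω)]; exact hg1 ω
  have hmono : ∫ ω, g ω * (μ[Z|m₁]) ω ∂μ ≤ ∫ ω, g ω * c ∂μ := by
    refine integral_mono_ae hint hgc ?_
    filter_upwards [hle] with ω hω
    exact mul_le_mul_of_nonneg_left hω (hg0 ω)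
  calc ∫ ω, g ω * (μ[Z|m₁]) ω ∂μ ≤ ∫ ω, g ω * c ∂μ := hmono
  _ = c * ∫ ω, g ω ∂μ := by simp [mul_comm, integral_const_mul]

end PullOut

section Main

variable {Ω : Type*} [MeasureSpace Ω] [IsProbabilityMeasure (ℙ : Measure Ω)]
  {d N : ℕ} {X : Fin N → Ω → EuclideanSpace ℝ (Fin d)} {Y : Fin N → Ω → ℝ}
  {r : EuclideanSpace ℝ (Fin d) → ℝ} {w : Fin N → (Fin N → EuclideanSpace ℝ (Fin d)) → ℝ}

lemma Y_memLp_aux (hN : 1 ≤ N) (hY : ∀ i, Measurable (Y i))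
    (hident : ∀ i, IdentDistrib (fun ω => (X i ω, Y i ω))
      (fun ω => (X ⟨0, hN⟩ ω, Y ⟨0, hN⟩ ω)) ℙ ℙ)
    (hY2 : Integrable (fun ω => (Y ⟨0, hN⟩ ω) ^ 2) ℙ) (i : Fin N) :
    MemLp (Y i) 2 ℙ := by
  have hY0L2 : MemLp (Y ⟨0, hN⟩) 2 ℙ :=
    (memLp_two_iff_integrable_sq (hY _).aestronglyMeasurable).mpr hY2
  have hidY : IdentDistrib (Y i) (Y ⟨0, hN⟩) ℙ ℙ := (hident i).comp measurable_snd
  exact hidY.memLp_iff.mpr hY0L2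

lemma Z_memLp_aux (hN : 1 ≤ N)
    (hX : ∀ i, Measurable (X i)) (hY : ∀ i, Measurable (Y i))
    (hident : ∀ i, IdentDistrib (fun ω => (X i ω, Y i ω))
      (fun ω => (X ⟨0, hN⟩ ω, Y ⟨0, hN⟩ ω)) ℙ ℙ)
    (hY2 : Integrable (fun ω => (Y ⟨0, hN⟩ ω) ^ 2) ℙ)
    (hreg : ∀ i, ℙ[Y i | MeasurableSpace.comap (X i) inferInstance]
      =ᵐ[ℙ] fun ω => r (X i ω)) (i : Fin N) :
    MemLp (fun ω => Y i ω - r (X i ω)) 2 ℙ := by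
  have hYiL2 : MemLp (Y i) 2 ℙ := Y_memLp_aux hN hY hident hY2 i
  have hrXiL2 : MemLp (fun ω => r (X i ω)) 2 ℙ :=
    (memLp_two_condexp_aux (hX i).comap_le hYiL2).ae_eq (hreg i)
  exact hYiL2.sub hrXiL2

lemma condexp_Z_zero_aux
    (hX : ∀ i, Measurable (X i)) (hr : Measurable r)
    (hYint : ∀ i, Integrable (Y i) ℙ)
    (hreg : ∀ i, ℙ[Y i | MeasurableSpace.comap (X i) inferInstance]
      =ᵐ[ℙ] fun ω => r (X i ω)) (i : Fin N) :
    ℙ[fun ω => Y i ω - r (X i ω) | MeasurableSpace.comap (X i) inferInstance]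
      =ᵐ[ℙ] 0 := by
  have hrXint : Integrable (fun ω => r (X i ω)) ℙ :=
    integrable_condExp.congr (hreg i)
  have hrXsm : StronglyMeasurable[MeasurableSpace.comap (X i) inferInstance]
      (fun ω => r (X i ω)) :=
    (hr.comp (measurable_iff_comap_le.mpr le_rfl)).stronglyMeasurable
  have hsub : ℙ[fun ω => Y i ω - r (X i ω) | MeasurableSpace.comap (X i) inferInstance]
      =ᵐ[ℙ] ℙ[Y i | MeasurableSpace.comap (X i) inferInstance]
        - ℙ[fun ω => r (X i ω) | MeasurableSpace.comap (X i) inferInstance] := by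
    have := condExp_sub (μ := ℙ) (m := MeasurableSpace.comap (X i) inferInstance)
      (hYint i) hrXint
    exact this
  refine hsub.trans ?_
  have h2 : ℙ[fun ω => r (X i ω) | MeasurableSpace.comap (X i) inferInstance]
      = fun ω => r (X i ω) :=
    condExp_of_stronglyMeasurable (hX i).comap_le hrXsm hrXint
  rw [h2]
  filter_upwards [hreg i] with ω hω
  simp only [Pi.sub_apply, hω, Pi.zero_apply, sub_self]

lemma indep_pair_rest_aux (hX : ∀ i, Measurable (X i)) (hY : ∀ i, Measurable (Y i))
    (hindep : iIndepFun (fun i ω => (X i ω, Y i ω)) ℙ)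
    (i : Fin N) :
    Indep (MeasurableSpace.comap (fun ω => (X i ω, Y i ω)) inferInstance)
      (MeasurableSpace.comap
        (fun ω (k : ({i}ᶜ : Finset (Fin N))) => (X (k : Fin N) ω, Y (k : Fin N) ω))
        inferInstance) ℙ := by
  classical
  have h := hindep.indepFun_finset {i} {i}ᶜ disjoint_compl_right
    (fun k => (hX k).prodMk (hY k))
  rw [IndepFun_iff_Indep] at h
  refine indep_of_indep_of_le_left h ?_
  have heq : (fun ω => (X i ω, Y i ω)) =
      (fun v : ({i} : Finset (Fin N)) → (EuclideanSpace ℝ (Fin d)) × ℝ =>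
        v ⟨i, Finset.mem_singleton_self i⟩) ∘
      (fun a (k : ({i} : Finset (Fin N))) => (X (k : Fin N) a, Y (k : Fin N) a)) := rfl
  rw [heq, ← MeasurableSpace.comap_comp]
  exact MeasurableSpace.comap_mono (measurable_pi_apply _).comap_le

lemma comap_X_le_comap_pair_aux (i : Fin N) :
    (MeasurableSpace.comap (X i) inferInstance : MeasurableSpace Ω) ≤
      MeasurableSpace.comap (fun ω => (X i ω, Y i ω)) inferInstance := by
  have heq : X i = Prod.fst ∘ (fun ω => (X i ω, Y i ω)) := rfl
  rw [heq, ← MeasurableSpace.comap_comp]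
  exact MeasurableSpace.comap_mono measurable_fst.comap_le

/-- Measurability of the weight functions w.r.t. the join σ-algebra. -/
lemma measurable_W_join_aux (hX : ∀ i, Measurable (X i)) (hY : ∀ i, Measurable (Y i))
    (hwmeas : ∀ i, Measurable (w i)) (i k : Fin N) :
    Measurable[MeasurableSpace.comap (X i) inferInstance ⊔
      MeasurableSpace.comap
        (fun ω (k : ({i}ᶜ : Finset (Fin N))) => (X (k : Fin N) ω, Y (k : Fin N) ω))
        inferInstance]
      (fun ω => w k (fun j => X j ω)) := by
  classical
  have hXk : ∀ j : Fin N, Measurable[MeasurableSpace.comap (X i) inferInstance ⊔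
      MeasurableSpace.comap
        (fun ω (k : ({i}ᶜ : Finset (Fin N))) => (X (k : Fin N) ω, Y (k : Fin N) ω))
        inferInstance] (X j) := by
    intro j
    by_cases hj : j = i
    · subst hj
      exact measurable_iff_comap_le.mpr le_sup_left
    · have hmem : j ∈ ({i}ᶜ : Finset (Fin N)) := by simp [hj]
      have hO : Measurable[MeasurableSpace.comap (X i) inferInstance ⊔
          MeasurableSpace.comap
            (fun ω (k : ({i}ᶜ : Finset (Fin N))) => (X (k : Fin N) ω, Y (k : Fin N) ω))
            inferInstance]
          (fun ω (k : ({i}ᶜ : Finset (Fin N))) => (X (k : Fin N) ω, Y (k : Fin N) ω)) :=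
        measurable_iff_comap_le.mpr le_sup_right
      exact (measurable_fst.comp (measurable_pi_apply (⟨j, hmem⟩ :
        ({i}ᶜ : Finset (Fin N))))).comp hO
  have hXX : Measurable[MeasurableSpace.comap (X i) inferInstance ⊔
      MeasurableSpace.comap
        (fun ω (k : ({i}ᶜ : Finset (Fin N))) => (X (k : Fin N) ω, Y (k : Fin N) ω))
        inferInstance]
      (fun ω (j : Fin N) => X j ω) := by
    letI m' : MeasurableSpace Ω := MeasurableSpace.comap (X i) inferInstance ⊔
      MeasurableSpace.comap
        (fun ω (k : ({i}ᶜ : Finset (Fin N))) => (X (k : Fin N) ω, Y (k : Fin N) ω))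
        inferInstance
    exact measurable_pi_lambda _ hXk
  exact (hwmeas k).comp hXX

/-- Measurability of the noise of another sample w.r.t. the join σ-algebra. -/
lemma measurable_Z_join_aux (hr : Measurable r) {i j : Fin N} (hij : j ≠ i) :
    Measurable[MeasurableSpace.comap (X i) inferInstance ⊔
      MeasurableSpace.comap
        (fun ω (k : ({i}ᶜ : Finset (Fin N))) => (X (k : Fin N) ω, Y (k : Fin N) ω))
        inferInstance]
      (fun ω => Y j ω - r (X j ω)) := by
  classical
  have hmem : j ∈ ({i}ᶜ : Finset (Fin N)) := by simp [hij]
  have hO : Measurable[MeasurableSpace.comap (X i) inferInstance ⊔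
      MeasurableSpace.comap
        (fun ω (k : ({i}ᶜ : Finset (Fin N))) => (X (k : Fin N) ω, Y (k : Fin N) ω))
        inferInstance]
      (fun ω (k : ({i}ᶜ : Finset (Fin N))) => (X (k : Fin N) ω, Y (k : Fin N) ω)) :=
    measurable_iff_comap_le.mpr le_sup_right
  exact ((measurable_snd.sub (hr.comp measurable_fst)).comp
    (measurable_pi_apply (⟨j, hmem⟩ : ({i}ᶜ : Finset (Fin N))))).comp hO

lemma measurable_Z_pair_aux (hr : Measurable r) (i : Fin N) :
    Measurable[MeasurableSpace.comap (fun ω => (X i ω, Y i ω)) inferInstance]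
      (fun ω => Y i ω - r (X i ω)) :=
  (measurable_snd.sub (hr.comp measurable_fst)).comp (measurable_iff_comap_le.mpr le_rfl)

lemma cross_zero_aux (hN : 1 ≤ N) (hX : ∀ i, Measurable (X i)) (hY : ∀ i, Measurable (Y i))
    (hindep : iIndepFun (fun i ω => (X i ω, Y i ω)) ℙ)
    (hident : ∀ i, IdentDistrib (fun ω => (X i ω, Y i ω))
      (fun ω => (X ⟨0, hN⟩ ω, Y ⟨0, hN⟩ ω)) ℙ ℙ)
    (hY2 : Integrable (fun ω => (Y ⟨0, hN⟩ ω) ^ 2) ℙ)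
    (hr : Measurable r)
    (hreg : ∀ i, ℙ[Y i | MeasurableSpace.comap (X i) inferInstance]
      =ᵐ[ℙ] fun ω => r (X i ω))
    (hwmeas : ∀ i, Measurable (w i))
    (hw0 : ∀ i v, 0 ≤ w i v) (hw1 : ∀ i v, w i v ≤ 1)
    {i j : Fin N} (hij : j ≠ i) :
    ∫ ω, (w i (fun k => X k ω) * w j (fun k => X k ω) * (Y j ω - r (X j ω)))
      * (Y i ω - r (X i ω)) ∂ℙ = 0 := by
  classical
  have hZL2 : ∀ k, MemLp (fun ω => Y k ω - r (X k ω)) 2 ℙ :=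
    Z_memLp_aux hN hX hY hident hY2 hreg
  have hOmeas : Measurable
      (fun ω (k : ({i}ᶜ : Finset (Fin N))) => (X (k : Fin N) ω, Y (k : Fin N) ω)) :=
    measurable_pi_lambda _ fun k => (hX k).prodMk (hY k)
  have hXXm : Measurable (fun ω (j : Fin N) => X j ω) := measurable_pi_lambda _ hX
  have hφ : Measurable (fun p : (EuclideanSpace ℝ (Fin d)) × ℝ => p.2 - r p.1) :=
    measurable_snd.sub (hr.comp measurable_fst)
  have hZZint : Integrable
      ((fun ω => Y j ω - r (X j ω)) * fun ω => Y i ω - r (X i ω)) ℙ := by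
    have hIF : IndepFun (fun ω => Y j ω - r (X j ω)) (fun ω => Y i ω - r (X i ω)) ℙ :=
      (hindep.indepFun hij).comp hφ hφ
    exact hIF.integrable_mul ((hZL2 j).integrable one_le_two)
      ((hZL2 i).integrable one_le_two)
  have hgZ : Integrable ((fun ω => w i (fun k => X k ω) * w j (fun k => X k ω)
      * (Y j ω - r (X j ω))) * fun ω => Y i ω - r (X i ω)) ℙ := by
    refine hZZint.mono ?_ (Filter.Eventually.of_forall fun ω => ?_)
    · exact ((((hwmeas i).comp hXXm).mul ((hwmeas j).comp hXXm)).mul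
        ((hY j).sub (hr.comp (hX j)))).mul
        ((hY i).sub (hr.comp (hX i))) |>.aestronglyMeasurable
    · simp only [Pi.mul_apply, Real.norm_eq_abs, abs_mul]
      rw [abs_of_nonneg (hw0 i _), abs_of_nonneg (hw0 j _)]
      have h1 := hw1 i (fun k => X k ω); have h0 := hw0 i (fun k => X k ω)
      have h1' := hw1 j (fun k => X k ω); have h0' := hw0 j (fun k => X k ω)
      have ha := abs_nonneg (Y j ω - r (X j ω))
      have hb := abs_nonneg (Y i ω - r (X i ω))
      have hw : w i (fun k => X k ω) * w j (fun k => X k ω) ≤ 1 :=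
        mul_le_one₀ h1 h0' h1'
      nlinarith [mul_nonneg ha hb, mul_nonneg (mul_nonneg h0 h0') (mul_nonneg ha hb)]
  have hYint : ∀ k, Integrable (Y k) ℙ := fun k =>
    (Y_memLp_aux hN hY hident hY2 k).integrable one_le_two
  refine integral_mul_eq_zero_of_condexp_zero
    (mF := MeasurableSpace.comap (fun ω => (X i ω, Y i ω)) inferInstance)
    (((hX i).prodMk (hY i)).comap_le) (hOmeas.comap_le) (comap_X_le_comap_pair_aux i)
    (indep_pair_rest_aux hX hY hindep i)
    ((hZL2 i).integrable one_le_two)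
    ((measurable_Z_pair_aux hr i).stronglyMeasurable)
    ?_ hgZ (condexp_Z_zero_aux hX hr hYint hreg i)
  exact (((measurable_W_join_aux hX hY hwmeas i i).mul
    (measurable_W_join_aux hX hY hwmeas i j)).mul
    (measurable_Z_join_aux hr hij)).stronglyMeasurable

lemma diag_le_aux (hN : 1 ≤ N) (hX : ∀ i, Measurable (X i)) (hY : ∀ i, Measurable (Y i))
    (hindep : iIndepFun (fun i ω => (X i ω, Y i ω)) ℙ)
    (hident : ∀ i, IdentDistrib (fun ω => (X i ω, Y i ω))
      (fun ω => (X ⟨0, hN⟩ ω, Y ⟨0, hN⟩ ω)) ℙ ℙ)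
    (hY2 : Integrable (fun ω => (Y ⟨0, hN⟩ ω) ^ 2) ℙ)
    (hr : Measurable r)
    (hreg : ∀ i, ℙ[Y i | MeasurableSpace.comap (X i) inferInstance]
      =ᵐ[ℙ] fun ω => r (X i ω))
    (hwmeas : ∀ i, Measurable (w i))
    (hw0 : ∀ i v, 0 ≤ w i v) (hw1 : ∀ i v, w i v ≤ 1) {σ : ℝ}
    (hvar : ∀ i, ℙ[fun ω => (Y i ω - r (X i ω)) ^ 2 |
        MeasurableSpace.comap (X i) inferInstance] ≤ᵐ[ℙ] fun _ => σ ^ 2)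
    (i : Fin N) :
    ∫ ω, (w i (fun k => X k ω)) ^ 2 * (Y i ω - r (X i ω)) ^ 2 ∂ℙ ≤
      σ ^ 2 * ∫ ω, (w i (fun k => X k ω)) ^ 2 ∂ℙ := by
  classical
  have hOmeas : Measurable
      (fun ω (k : ({i}ᶜ : Finset (Fin N))) => (X (k : Fin N) ω, Y (k : Fin N) ω)) :=
    measurable_pi_lambda _ fun k => (hX k).prodMk (hY k)
  have hXXm : Measurable (fun ω (j : Fin N) => X j ω) := measurable_pi_lambda _ hX
  have hZ2int : Integrable (fun ω => (Y i ω - r (X i ω)) ^ 2) ℙ :=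
    (Z_memLp_aux hN hX hY hident hY2 hreg i).integrable_sq
  have hgZ : Integrable ((fun ω => (w i (fun k => X k ω)) ^ 2)
      * fun ω => (Y i ω - r (X i ω)) ^ 2) ℙ := by
    refine hZ2int.mono ?_ (Filter.Eventually.of_forall fun ω => ?_)
    · exact ((((hwmeas i).comp hXXm).pow_const 2).mul
        (((hY i).sub (hr.comp (hX i))).pow_const 2)).aestronglyMeasurable
    · simp only [Pi.mul_apply, Real.norm_eq_abs, abs_mul]
      have h1 := hw1 i (fun k => X k ω); have h0 := hw0 i (fun k => X k ω)
      rw [abs_of_nonneg (sq_nonneg (w i (fun k => X k ω)))]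
      exact mul_le_of_le_one_left (abs_nonneg _) (pow_le_one₀ h0 h1)
  refine integral_mul_le_of_condexp_le
    (mF := MeasurableSpace.comap (fun ω => (X i ω, Y i ω)) inferInstance)
    (((hX i).prodMk (hY i)).comap_le) (hOmeas.comap_le) (comap_X_le_comap_pair_aux i)
    (indep_pair_rest_aux hX hY hindep i) hZ2int
    (((measurable_Z_pair_aux hr i).pow_const 2).stronglyMeasurable)
    ?_ hgZ (fun ω => sq_nonneg _) (fun ω => ?_) (hvar i)
  · exact ((measurable_W_join_aux hX hY hwmeas i i).pow_const 2).stronglyMeasurable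
  · exact pow_le_one₀ (hw0 i _) (hw1 i _)

lemma term_int_aux (hN : 1 ≤ N) (hX : ∀ i, Measurable (X i)) (hY : ∀ i, Measurable (Y i))
    (hindep : iIndepFun (fun i ω => (X i ω, Y i ω)) ℙ)
    (hident : ∀ i, IdentDistrib (fun ω => (X i ω, Y i ω))
      (fun ω => (X ⟨0, hN⟩ ω, Y ⟨0, hN⟩ ω)) ℙ ℙ)
    (hY2 : Integrable (fun ω => (Y ⟨0, hN⟩ ω) ^ 2) ℙ)
    (hr : Measurable r)
    (hreg : ∀ i, ℙ[Y i | MeasurableSpace.comap (X i) inferInstance]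
      =ᵐ[ℙ] fun ω => r (X i ω))
    (hwmeas : ∀ i, Measurable (w i))
    (hw0 : ∀ i v, 0 ≤ w i v) (hw1 : ∀ i v, w i v ≤ 1)
    (k l : Fin N) :
    Integrable (fun ω => (w k (fun j => X j ω) * (Y k ω - r (X k ω)))
      * (w l (fun j => X j ω) * (Y l ω - r (X l ω)))) ℙ := by
  classical
  have hZL2 : ∀ k, MemLp (fun ω => Y k ω - r (X k ω)) 2 ℙ :=
    Z_memLp_aux hN hX hY hident hY2 hreg
  have hXXm : Measurable (fun ω (j : Fin N) => X j ω) := measurable_pi_lambda _ hX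
  have hφ : Measurable (fun p : (EuclideanSpace ℝ (Fin d)) × ℝ => p.2 - r p.1) :=
    measurable_snd.sub (hr.comp measurable_fst)
  have hZZint : Integrable (fun ω => (Y k ω - r (X k ω)) * (Y l ω - r (X l ω))) ℙ := by
    by_cases hkl : k = l
    · subst hkl
      have := (hZL2 k).integrable_sq
      refine this.congr (Filter.Eventually.of_forall fun ω => ?_)
      ring
    · have hIF : IndepFun (fun ω => Y k ω - r (X k ω)) (fun ω => Y l ω - r (X l ω)) ℙ :=
        (hindep.indepFun hkl).comp hφ hφ
      exact hIF.integrable_mul ((hZL2 k).integrable one_le_two)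
        ((hZL2 l).integrable one_le_two)
  refine hZZint.mono ?_ (Filter.Eventually.of_forall fun ω => ?_)
  · exact (((hwmeas k).comp hXXm).mul ((hY k).sub (hr.comp (hX k)))).mul
      (((hwmeas l).comp hXXm).mul ((hY l).sub (hr.comp (hX l)))) |>.aestronglyMeasurable
  · simp only [Real.norm_eq_abs, abs_mul]
    rw [abs_of_nonneg (hw0 k _), abs_of_nonneg (hw0 l _)]
    have h1 := hw1 k (fun j => X j ω); have h0 := hw0 k (fun j => X j ω)
    have h1' := hw1 l (fun j => X j ω); have h0' := hw0 l (fun j => X j ω)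
    have ha := abs_nonneg (Y k ω - r (X k ω))
    have hb := abs_nonneg (Y l ω - r (X l ω))
    nlinarith [mul_nonneg ha hb, mul_nonneg (mul_nonneg h0 h0') (mul_nonneg ha hb),
      mul_le_one₀ h1 h0' h1']

end Main

/-- inequality (2.2) of Lemma 2.2 of the paper: deviation bound
for local averaging estimates, with weights depending only on the features.
The regression function `r` is a 1-Lipschitz version of `E[Y | X = ·]`, and the
conditional variance of the noise is at most `σ²`. -/
theorem local_averaging_deviation_bound
    {Ω : Type*} [MeasureSpace Ω] [IsProbabilityMeasure (ℙ : Measure Ω)]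
    (d N : ℕ) (hN : 1 ≤ N) (σ : ℝ)
    (X : Fin N → Ω → EuclideanSpace ℝ (Fin d)) (Y : Fin N → Ω → ℝ)
    (hX : ∀ i, Measurable (X i)) (hY : ∀ i, Measurable (Y i))
    (hindep : iIndepFun (fun i ω => (X i ω, Y i ω)) ℙ)
    (hident : ∀ i, IdentDistrib (fun ω => (X i ω, Y i ω))
      (fun ω => (X ⟨0, hN⟩ ω, Y ⟨0, hN⟩ ω)) ℙ ℙ)
    (hY2 : Integrable (fun ω => (Y ⟨0, hN⟩ ω) ^ 2) ℙ)
    (r : EuclideanSpace ℝ (Fin d) → ℝ) (hr : Measurable r)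
    (hLip : LipschitzWith 1 r)
    (hreg : ∀ i, ℙ[Y i | MeasurableSpace.comap (X i) inferInstance]
      =ᵐ[ℙ] fun ω => r (X i ω))
    (hvar : ∀ i, ℙ[fun ω => (Y i ω - r (X i ω)) ^ 2 |
        MeasurableSpace.comap (X i) inferInstance] ≤ᵐ[ℙ] fun _ => σ ^ 2)
    (w : Fin N → (Fin N → EuclideanSpace ℝ (Fin d)) → ℝ)
    (hwmeas : ∀ i, Measurable (w i))
    (hw0 : ∀ i v, 0 ≤ w i v) (hw1 : ∀ i v, w i v ≤ 1)
    (hwsum : ∀ v, ∑ i, w i v = 1)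
    (x : EuclideanSpace ℝ (Fin d)) (s t : ℝ) (hs : 0 < s) (ht : 0 < t) :
    (ℙ {ω | t + s ≤ |(∑ i, w i (fun j => X j ω) * Y i ω) - r x|}).toReal ≤
      σ ^ 2 * (∫ ω, ∑ i, (w i (fun j => X j ω)) ^ 2 ∂ℙ) / t ^ 2 +
        (ℙ {ω | s ≤ ∑ i, w i (fun j => X j ω) * ‖X i ω - x‖}).toReal := by
  classical
  have hXXm : Measurable (fun ω (j : Fin N) => X j ω) := measurable_pi_lambda _ hX
  have hterm : ∀ k l : Fin N, Integrable (fun ω =>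
      (w k (fun j => X j ω) * (Y k ω - r (X k ω)))
        * (w l (fun j => X j ω) * (Y l ω - r (X l ω)))) ℙ :=
    term_int_aux hN hX hY hindep hident hY2 hr hreg hwmeas hw0 hw1
  have hW2int : ∀ k : Fin N, Integrable (fun ω => (w k (fun j => X j ω)) ^ 2) ℙ := by
    intro k
    refine (integrable_const (1:ℝ)).mono'
      (((hwmeas k).comp hXXm).pow_const 2).aestronglyMeasurable
      (Filter.Eventually.of_forall fun ω => ?_)
    rw [Real.norm_eq_abs, abs_of_nonneg (sq_nonneg _)]
    exact pow_le_one₀ (hw0 k _) (hw1 k _)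
  -- the squared martingale part
  have hM2eq : ∀ ω : Ω, (∑ i, w i (fun j => X j ω) * (Y i ω - r (X i ω))) ^ 2
      = ∑ k, ∑ l, (w k (fun j => X j ω) * (Y k ω - r (X k ω)))
          * (w l (fun j => X j ω) * (Y l ω - r (X l ω))) := by
    intro ω
    rw [sq, Finset.sum_mul_sum]
  have hM2int : Integrable
      (fun ω => (∑ i, w i (fun j => X j ω) * (Y i ω - r (X i ω))) ^ 2) ℙ := by
    have h := integrable_finset_sum (μ := ℙ) Finset.univ
      (fun k (_ : k ∈ Finset.univ) => integrable_finset_sum (μ := ℙ) Finset.univ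
        (fun l (_ : l ∈ Finset.univ) => hterm k l))
    exact h.congr (Filter.Eventually.of_forall fun ω => (hM2eq ω).symm)
  have hM2le : ∫ ω, (∑ i, w i (fun j => X j ω) * (Y i ω - r (X i ω))) ^ 2 ∂ℙ ≤
      σ ^ 2 * ∫ ω, ∑ i, (w i (fun j => X j ω)) ^ 2 ∂ℙ := by
    have e1 : ∫ ω, (∑ i, w i (fun j => X j ω) * (Y i ω - r (X i ω))) ^ 2 ∂ℙ
        = ∑ k, ∑ l, ∫ ω, (w k (fun j => X j ω) * (Y k ω - r (X k ω)))
            * (w l (fun j => X j ω) * (Y l ω - r (X l ω))) ∂ℙ := by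
      rw [integral_congr_ae (Filter.Eventually.of_forall hM2eq)]
      rw [integral_finset_sum Finset.univ
        (fun k _ => integrable_finset_sum Finset.univ (fun l _ => hterm k l))]
      exact Finset.sum_congr rfl fun k _ =>
        integral_finset_sum Finset.univ (fun l _ => hterm k l)
    rw [e1]
    have e2 : ∀ k : Fin N,
        (∑ l, ∫ ω, (w k (fun j => X j ω) * (Y k ω - r (X k ω)))
          * (w l (fun j => X j ω) * (Y l ω - r (X l ω))) ∂ℙ) ≤
        σ ^ 2 * ∫ ω, (w k (fun j => X j ω)) ^ 2 ∂ℙ := by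
      intro k
      rw [Finset.sum_eq_single k]
      · have hdiag : ∫ ω, (w k (fun j => X j ω) * (Y k ω - r (X k ω)))
            * (w k (fun j => X j ω) * (Y k ω - r (X k ω))) ∂ℙ
            = ∫ ω, (w k (fun j => X j ω)) ^ 2 * (Y k ω - r (X k ω)) ^ 2 ∂ℙ := by
          refine integral_congr_ae (Filter.Eventually.of_forall fun ω => ?_)
          ring
        rw [hdiag]
        exact diag_le_aux hN hX hY hindep hident hY2 hr hreg hwmeas hw0 hw1 hvar k
      · intro l _ hlk
        have h0 := cross_zero_aux hN hX hY hindep hident hY2 hr hreg hwmeas hw0 hw1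
          (i := l) (j := k) (Ne.symm hlk)
        rw [← h0]
        refine integral_congr_ae (Filter.Eventually.of_forall fun ω => ?_)
        ring
      · intro hk
        exact absurd (Finset.mem_univ k) hk
    calc (∑ k, ∑ l, ∫ ω, (w k (fun j => X j ω) * (Y k ω - r (X k ω)))
            * (w l (fun j => X j ω) * (Y l ω - r (X l ω))) ∂ℙ)
        ≤ ∑ k, σ ^ 2 * ∫ ω, (w k (fun j => X j ω)) ^ 2 ∂ℙ :=
          Finset.sum_le_sum fun k _ => e2 k
      _ = σ ^ 2 * ∑ k, ∫ ω, (w k (fun j => X j ω)) ^ 2 ∂ℙ := by rw [Finset.mul_sum]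
      _ = σ ^ 2 * ∫ ω, ∑ i, (w i (fun j => X j ω)) ^ 2 ∂ℙ := by
          rw [integral_finset_sum Finset.univ (fun k _ => hW2int k)]
  -- Chebyshev
  have hcheb : (ℙ {ω | t ≤ |∑ i, w i (fun j => X j ω) * (Y i ω - r (X i ω))|}).toReal ≤
      (∫ ω, (∑ i, w i (fun j => X j ω) * (Y i ω - r (X i ω))) ^ 2 ∂ℙ) / t ^ 2 := by
    have hset : {ω | t ≤ |∑ i, w i (fun j => X j ω) * (Y i ω - r (X i ω))|}
        = {ω | t ^ 2 ≤ (∑ i, w i (fun j => X j ω) * (Y i ω - r (X i ω))) ^ 2} := by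
      ext ω
      simp only [Set.mem_setOf_eq]
      constructor
      · intro h
        calc t ^ 2 ≤ |∑ i, w i (fun j => X j ω) * (Y i ω - r (X i ω))| ^ 2 :=
              pow_le_pow_left₀ ht.le h 2
          _ = (∑ i, w i (fun j => X j ω) * (Y i ω - r (X i ω))) ^ 2 := sq_abs _
      · intro h
        refine le_of_pow_le_pow_left₀ two_ne_zero (abs_nonneg _) ?_
        rwa [sq_abs]
    have hmar := mul_meas_ge_le_integral_of_nonneg
      (Filter.Eventually.of_forall fun ω =>
        sq_nonneg (∑ i, w i (fun j => X j ω) * (Y i ω - r (X i ω)))) hM2int (t ^ 2)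
    rw [hset, le_div_iff₀ (by positivity : (0:ℝ) < t ^ 2)]
    calc (ℙ {ω | t ^ 2 ≤ (∑ i, w i (fun j => X j ω) * (Y i ω - r (X i ω))) ^ 2}).toReal
          * t ^ 2
        = t ^ 2 * (ℙ {ω | t ^ 2 ≤
            (∑ i, w i (fun j => X j ω) * (Y i ω - r (X i ω))) ^ 2}).toReal := by ring
      _ ≤ _ := hmar
  -- inclusion of events
  have hEsub : {ω | t + s ≤ |(∑ i, w i (fun j => X j ω) * Y i ω) - r x|} ⊆
      {ω | t ≤ |∑ i, w i (fun j => X j ω) * (Y i ω - r (X i ω))|} ∪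
      {ω | s ≤ ∑ i, w i (fun j => X j ω) * ‖X i ω - x‖} := by
    intro ω hω
    simp only [Set.mem_setOf_eq] at hω
    by_contra hcon
    simp only [Set.mem_union, Set.mem_setOf_eq, not_or, not_le] at hcon
    obtain ⟨h1, h2⟩ := hcon
    have key : |(∑ i, w i (fun j => X j ω) * Y i ω) - r x| ≤
        |∑ i, w i (fun j => X j ω) * (Y i ω - r (X i ω))|
          + ∑ i, w i (fun j => X j ω) * ‖X i ω - x‖ := by
      have e1 : (∑ i, w i (fun j => X j ω) * Y i ω) - r x
          = (∑ i, w i (fun j => X j ω) * (Y i ω - r (X i ω)))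
            + ∑ i, w i (fun j => X j ω) * (r (X i ω) - r x) := by
        rw [← Finset.sum_add_distrib]
        simp only [← mul_add, sub_add_sub_cancel]
        simp only [mul_sub]
        rw [Finset.sum_sub_distrib, ← Finset.sum_mul, hwsum, one_mul]
      rw [e1]
      refine (abs_add_le _ _).trans ?_
      refine add_le_add_right ?_ _
      calc |∑ i, w i (fun j => X j ω) * (r (X i ω) - r x)|
          ≤ ∑ i, |w i (fun j => X j ω) * (r (X i ω) - r x)| :=
            Finset.abs_sum_le_sum_abs _ _
        _ ≤ ∑ i, w i (fun j => X j ω) * ‖X i ω - x‖ := by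
            refine Finset.sum_le_sum fun i _ => ?_
            rw [abs_mul, abs_of_nonneg (hw0 i _)]
            refine mul_le_mul_of_nonneg_left ?_ (hw0 i _)
            have hd := hLip.dist_le_mul (X i ω) x
            simpa [Real.dist_eq, dist_eq_norm] using hd
    linarith
  -- put everything together
  have hPsub : ℙ {ω | t + s ≤ |(∑ i, w i (fun j => X j ω) * Y i ω) - r x|} ≤
      ℙ {ω | t ≤ |∑ i, w i (fun j => X j ω) * (Y i ω - r (X i ω))|} +
      ℙ {ω | s ≤ ∑ i, w i (fun j => X j ω) * ‖X i ω - x‖} :=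
    le_trans (measure_mono hEsub) (measure_union_le _ _)
  have htR : (ℙ {ω | t + s ≤ |(∑ i, w i (fun j => X j ω) * Y i ω) - r x|}).toReal ≤
      (ℙ {ω | t ≤ |∑ i, w i (fun j => X j ω) * (Y i ω - r (X i ω))|}).toReal +
      (ℙ {ω | s ≤ ∑ i, w i (fun j => X j ω) * ‖X i ω - x‖}).toReal := by
    rw [← ENNReal.toReal_add (measure_ne_top _ _) (measure_ne_top _ _)]
    exact ENNReal.toReal_mono
      (ENNReal.add_ne_top.mpr ⟨measure_ne_top _ _, measure_ne_top _ _⟩) hPsub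
  have hfinal : (ℙ {ω | t ≤ |∑ i, w i (fun j => X j ω) * (Y i ω - r (X i ω))|}).toReal ≤
      σ ^ 2 * (∫ ω, ∑ i, (w i (fun j => X j ω)) ^ 2 ∂ℙ) / t ^ 2 := by
    refine hcheb.trans ?_
    exact div_le_div_of_nonneg_right hM2le (by positivity) |>.trans_eq rfl
  linarith
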